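/- Let (C_i) be a sequence of linear codes over F_q with lengths n_i → ∞, dimensions k_i with k_i/n_i → R, and suppose there are g_i ≥ 0 with g_i/n_i → γ and 1 - R - γ > 0 such that d_1(C_i) ≥ n_i - k_i - g_i for all i. Let (m_i) be positive integers with m_i ≤ k_i and m_i/n_i → ρ > 0. Then liminf_{i→∞} d_{m_i}(C_i)/n_i ≥ (q/(q-1))·(1 - R - γ) + ρ. -/

import Mathlib

open Filter Topology

/-- The support size of a subcode `D ⊆ F^n`: number of coordinates where some
codeword of `D` is nonzero. -/
noncomputable def codeSupp {F : Type} [Field F] {n : ℕ}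
    (D : Submodule F (Fin n → F)) : ℕ :=
  Set.ncard {i : Fin n | ∃ d ∈ D, d i ≠ 0}

/-- The `m`-th relative generalized Hamming weight of a nested pair `C2 ⊆ C1`. -/
noncomputable def RGHW {F : Type} [Field F] {n : ℕ}
    (m : ℕ) (C1 C2 : Submodule F (Fin n → F)) : ℕ :=
  sInf {w : ℕ | ∃ D : Submodule F (Fin n → F),
    D ≤ C1 ∧ Module.finrank F ↥D = m ∧ D ⊓ C2 = ⊥ ∧ codeSupp D = w}

/-- The `m`-th generalized Hamming weight of a code `C`. -/
noncomputable def GHW {F : Type} [Field F] {n : ℕ}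
    (m : ℕ) (C : Submodule F (Fin n → F)) : ℕ :=
  RGHW m C ⊥

/-- The dual code with respect to the standard bilinear form. -/
def dualCode {F : Type} [Field F] {n : ℕ}
    (C : Submodule F (Fin n → F)) : Submodule F (Fin n → F) where
  carrier := {y | ∀ x ∈ C, ∑ i, x i * y i = 0}
  add_mem' := by
    intro a b ha hb x hx
    simp only [Set.mem_setOf_eq] at *
    simp only [Pi.add_apply, mul_add, Finset.sum_add_distrib, ha x hx, hb x hx, add_zero]
  zero_mem' := by
    intro x hx; simp
  smul_mem' := by
    intro c a ha x hx
    simp only [Set.mem_setOf_eq] at *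
    simp only [Pi.smul_apply, smul_eq_mul, mul_left_comm, ← Finset.mul_sum, ha x hx, mul_zero]

/-- The subspace `V_I` of vectors supported on the coordinate set `I`. -/
def VI (F : Type) [Field F] {n : ℕ} (I : Finset (Fin n)) : Submodule F (Fin n → F) where
  carrier := {x | ∀ i, i ∉ I → x i = 0}
  add_mem' := by intro a b ha hb i hi; simp [ha i hi, hb i hi]
  zero_mem' := by intro i hi; rfl
  smul_mem' := by intro c a ha i hi; simp [ha i hi]

/-- The relative dimension length profile `K_d(C1, C2)`. -/
noncomputable def RDLP {F : Type} [Field F] {n : ℕ}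
    (d : ℕ) (C1 C2 : Submodule F (Fin n → F)) : ℕ :=
  sSup {k : ℕ | ∃ I : Finset (Fin n), I.card = d ∧
    Module.finrank F ↥(C1 ⊓ VI F I) - Module.finrank F ↥(C2 ⊓ VI F I) = k}

section aux
open Module
attribute [local instance] Classical.propDecidable
variable {F : Type} [Field F] {n : ℕ}

def suppSet (D : Submodule F (Fin n → F)) : Set (Fin n) := {i | ∃ d ∈ D, d i ≠ 0}

lemma codeSupp_def (D : Submodule F (Fin n → F)) : codeSupp D = (suppSet D).ncard := rfl

lemma GHW_eq (m : ℕ) (C : Submodule F (Fin n → F)) :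
    GHW m C = sInf {w : ℕ | ∃ D : Submodule F (Fin n → F),
      D ≤ C ∧ Module.finrank F ↥D = m ∧ codeSupp D = w} := by
  unfold GHW RGHW
  congr 1
  ext w
  simp [inf_bot_eq]

lemma GHW_le {C D : Submodule F (Fin n → F)} {m : ℕ} (hD : D ≤ C)
    (hfr : Module.finrank F ↥D = m) : GHW m C ≤ codeSupp D := by
  rw [GHW_eq]
  exact Nat.sInf_le ⟨D, hD, hfr, rfl⟩

lemma exists_subcode (C : Submodule F (Fin n → F)) (m : ℕ) (hm : m ≤ finrank F ↥C) :
    ∃ D : Submodule F (Fin n → F), D ≤ C ∧ finrank F ↥D = m := by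
  obtain ⟨s, hcard, hli⟩ := exists_finset_linearIndependent_of_le_finrank (R := F) (M := ↥C) hm
  refine ⟨(Submodule.span F (s : Set ↥C)).map C.subtype, Submodule.map_subtype_le _ _, ?_⟩
  rw [Submodule.finrank_map_subtype_eq, finrank_span_finset_eq_card hli, hcard]

lemma GHW_exists (C : Submodule F (Fin n → F)) (m : ℕ) (hm : m ≤ finrank F ↥C) :
    ∃ D : Submodule F (Fin n → F), D ≤ C ∧ finrank F ↥D = m ∧ codeSupp D = GHW m C := by
  obtain ⟨D, hD, hfr⟩ := exists_subcode C m hm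
  have hne : {w : ℕ | ∃ D : Submodule F (Fin n → F),
      D ≤ C ∧ Module.finrank F ↥D = m ∧ codeSupp D = w}.Nonempty := ⟨_, D, hD, hfr, rfl⟩
  have := Nat.sInf_mem hne
  rw [← GHW_eq] at this
  obtain ⟨D', h1, h2, h3⟩ := this
  exact ⟨D', h1, h2, h3⟩

/-- weight of a vector -/
noncomputable def wt (v : Fin n → F) : ℕ :=
  (Finset.univ.filter (fun i => v i ≠ 0)).card

lemma codeSupp_span_singleton (v : Fin n → F) :
    codeSupp (Submodule.span F {v}) = wt v := by
  classical
  rw [codeSupp_def]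
  have hset : suppSet (Submodule.span F {v}) = ↑(Finset.univ.filter (fun i => v i ≠ 0)) := by
    ext i
    simp only [suppSet, Set.mem_setOf_eq, Finset.coe_filter, Finset.mem_univ, true_and,
      Set.mem_setOf_eq]
    constructor
    · rintro ⟨x, hx, hxi⟩
      obtain ⟨c, rfl⟩ := Submodule.mem_span_singleton.mp hx
      intro hv
      apply hxi
      simp [hv]
    · intro hv
      exact ⟨v, Submodule.mem_span_singleton_self v, hv⟩
  rw [hset, Set.ncard_coe_finset]
  unfold wt
  congr 1

lemma GHW_one_le_wt {C : Submodule F (Fin n → F)} {v : Fin n → F}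
    (hv : v ∈ C) (hvne : v ≠ 0) : GHW 1 C ≤ wt v := by
  rw [← codeSupp_span_singleton]
  exact GHW_le ((Submodule.span_singleton_le_iff_mem v C).mpr hv) (finrank_span_singleton hvne)

lemma card_filter_eval_ne_zero [Fintype F] (D : Submodule F (Fin n → F)) [Fintype ↥D]
    (i : Fin n) (hi : i ∈ suppSet D) {m : ℕ} (hm : finrank F ↥D = m) (hm1 : 1 ≤ m) :
    (Finset.univ.filter (fun d : ↥D => (d : Fin n → F) i ≠ 0)).card
      = Fintype.card F ^ m - Fintype.card F ^ (m - 1) := by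
  classical
  obtain ⟨d0, hd0, hd0i⟩ := hi
  let f : ↥D →ₗ[F] F := (LinearMap.proj i).comp D.subtype
  have hr : LinearMap.range f = ⊤ := by
    rw [LinearMap.range_eq_top]
    intro c
    refine ⟨(c / d0 i) • ⟨d0, hd0⟩, ?_⟩
    show (c / d0 i) • d0 i = c
    rw [smul_eq_mul, div_mul_cancel₀ c hd0i]
  have hker : finrank F ↥(LinearMap.ker f) = m - 1 := by
    have h2 := LinearMap.finrank_range_add_finrank_ker f
    rw [hr, finrank_top, finrank_self, hm] at h2
    omega
  have hcardD : Fintype.card ↥D = Fintype.card F ^ m := by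
    rw [card_eq_pow_finrank (K := F), hm]
  have hcardker : Fintype.card ↥(LinearMap.ker f) = Fintype.card F ^ (m - 1) := by
    rw [card_eq_pow_finrank (K := F), hker]
  have h2 : Fintype.card ↥(LinearMap.ker f)
      = (Finset.univ.filter (fun d : ↥D => ¬ ((d : Fin n → F) i ≠ 0))).card := by
    have : Fintype.card ↥(LinearMap.ker f) = Fintype.card {d : ↥D // f d = 0} :=
      Fintype.card_congr (Equiv.refl _)
    rw [this, Fintype.card_subtype]
    congr 1
    apply Finset.filter_congr
    intro d _
    simp [f]
  have h3 := Finset.card_filter_add_card_filter_not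
    (s := (Finset.univ : Finset ↥D)) (p := fun d : ↥D => (d : Fin n → F) i ≠ 0)
  rw [Finset.card_univ, hcardD] at h3
  rw [← h2] at h3
  have hle : Fintype.card F ^ (m-1) ≤ Fintype.card F ^ m :=
    Nat.pow_le_pow_right Fintype.card_pos (by omega)
  omega

lemma GHW_ratio [Fintype F] (C : Submodule F (Fin n → F)) (m : ℕ) (h1 : 1 ≤ m)
    (hm : m ≤ finrank F ↥C) :
    (Fintype.card F ^ m - 1) * GHW 1 C
      ≤ (Fintype.card F ^ m - Fintype.card F ^ (m-1)) * GHW m C := by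
  classical
  obtain ⟨D, hD, hfr, hsupp⟩ := GHW_exists C m hm
  haveI : Fintype ↥D := Fintype.ofFinite _
  -- double count
  have hswap : ∑ d : ↥D, wt (d : Fin n → F)
      = ∑ i : Fin n, (Finset.univ.filter (fun d : ↥D => (d : Fin n → F) i ≠ 0)).card := by
    simp only [wt, Finset.card_filter]
    exact Finset.sum_comm
  -- upper evaluation
  set suppF : Finset (Fin n) := Finset.univ.filter (fun i => ∃ d ∈ D, d i ≠ 0) with hsuppF
  have hsuppcard : suppF.card = GHW m C := by
    rw [← hsupp, codeSupp_def]
    have : suppSet D = ↑suppF := by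
      ext i; simp [suppSet, hsuppF]
    rw [this, Set.ncard_coe_finset]
  have hzero : ∀ i ∈ Finset.univ, i ∉ suppF →
      (Finset.univ.filter (fun d : ↥D => (d : Fin n → F) i ≠ 0)).card = 0 := by
    intro i _ hi
    rw [hsuppF, Finset.mem_filter] at hi
    push_neg at hi
    have hall : ∀ d ∈ D, d i = 0 := by simpa using hi
    rw [Finset.card_eq_zero, Finset.filter_eq_empty_iff]
    intro d _
    simp only [ne_eq, not_not]
    exact hall d d.2
  have hupper : ∑ i : Fin n, (Finset.univ.filter (fun d : ↥D => (d : Fin n → F) i ≠ 0)).card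
      = (Fintype.card F ^ m - Fintype.card F ^ (m-1)) * GHW m C := by
    rw [← Finset.sum_subset (Finset.subset_univ suppF) hzero]
    have hc : ∀ i ∈ suppF, (Finset.univ.filter (fun d : ↥D => (d : Fin n → F) i ≠ 0)).card
        = Fintype.card F ^ m - Fintype.card F ^ (m-1) := by
      intro i hi
      apply card_filter_eval_ne_zero D i _ hfr h1
      rw [hsuppF] at hi
      simpa [suppSet] using (Finset.mem_filter.mp hi).2
    rw [Finset.sum_congr rfl hc, Finset.sum_const, smul_eq_mul, hsuppcard, mul_comm]
  -- lower evaluation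
  have hlower : (Fintype.card F ^ m - 1) * GHW 1 C ≤ ∑ d : ↥D, wt (d : Fin n → F) := by
    have hstep : ∀ d ∈ (Finset.univ : Finset ↥D).erase 0, GHW 1 C ≤ wt (d : Fin n → F) := by
      intro d hd
      have hdne : d ≠ 0 := (Finset.mem_erase.mp hd).1
      exact GHW_one_le_wt (hD d.2) (fun h => hdne (Subtype.ext h))
    calc (Fintype.card F ^ m - 1) * GHW 1 C
        = ∑ _d ∈ (Finset.univ : Finset ↥D).erase 0, GHW 1 C := by
          rw [Finset.sum_const, smul_eq_mul, Finset.card_erase_of_mem (Finset.mem_univ 0),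
            Finset.card_univ, card_eq_pow_finrank (K := F) (V := ↥D), hfr]
      _ ≤ ∑ d ∈ (Finset.univ : Finset ↥D).erase 0, wt (d : Fin n → F) :=
          Finset.sum_le_sum hstep
      _ ≤ ∑ d : ↥D, wt (d : Fin n → F) :=
          Finset.sum_le_sum_of_subset (Finset.erase_subset _ _)
  rw [hswap, hupper] at hlower
  exact hlower

-- aux lemmas continued + main theorem (to be appended to t4 content)

lemma suppSet_nonempty {D : Submodule F (Fin n → F)} (h : D ≠ ⊥) : (suppSet D).Nonempty := by
  obtain ⟨d, hd, hdne⟩ := Submodule.exists_mem_ne_zero_of_ne_bot h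
  obtain ⟨i, hi⟩ := Function.ne_iff.mp hdne
  exact ⟨i, d, hd, hi⟩

lemma shrink_step (D : Submodule F (Fin n → F)) (i : Fin n) (hi : i ∈ suppSet D) :
    ∃ D' : Submodule F (Fin n → F), D' ≤ D ∧ finrank F ↥D' + 1 = finrank F ↥D ∧
      suppSet D' ⊆ suppSet D \ {i} := by
  obtain ⟨d0, hd0, hd0i⟩ := hi
  let f : ↥D →ₗ[F] F := (LinearMap.proj i).comp D.subtype
  refine ⟨(LinearMap.ker f).map D.subtype, Submodule.map_subtype_le _ _, ?_, ?_⟩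
  · rw [Submodule.finrank_map_subtype_eq]
    have hr : LinearMap.range f = ⊤ := by
      rw [LinearMap.range_eq_top]
      intro c
      refine ⟨(c / d0 i) • ⟨d0, hd0⟩, ?_⟩
      show (c / d0 i) • d0 i = c
      rw [smul_eq_mul, div_mul_cancel₀ c hd0i]
    have h2 := LinearMap.finrank_range_add_finrank_ker f
    rw [hr, finrank_top, finrank_self] at h2
    omega
  · rintro j ⟨d, hd, hdj⟩
    obtain ⟨⟨d', hd'⟩, hker, rfl⟩ := hd
    have hdi : d' i = 0 := hker
    constructor
    · exact ⟨d', hd', hdj⟩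
    · simp only [Set.mem_singleton_iff]
      rintro rfl
      exact hdj hdi

lemma shrink (D : Submodule F (Fin n → F)) :
    ∀ j : ℕ, j ≤ finrank F ↥D →
    ∃ D' : Submodule F (Fin n → F), D' ≤ D ∧ finrank F ↥D' + j = finrank F ↥D ∧
      (suppSet D').ncard + j ≤ (suppSet D).ncard := by
  intro j
  induction j with
  | zero => exact fun _ => ⟨D, le_rfl, by omega, by omega⟩
  | succ j ih =>
    intro hj
    obtain ⟨D1, hD1le, hD1fr, hD1supp⟩ := ih (by omega)
    have hD1ne : D1 ≠ ⊥ := by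
      intro hbot
      rw [hbot, finrank_bot] at hD1fr
      omega
    obtain ⟨i, hi⟩ := suppSet_nonempty hD1ne
    obtain ⟨D', hle, hfr, hsupp⟩ := shrink_step D1 i hi
    refine ⟨D', hle.trans hD1le, by omega, ?_⟩
    have hlt : (suppSet D').ncard < (suppSet D1).ncard := by
      apply Set.ncard_lt_ncard _ (Set.toFinite _)
      constructor
      · exact hsupp.trans Set.diff_subset
      · intro hsub
        exact ((hsupp (hsub hi)).2 rfl)
    omega

lemma GHW_mono (C : Submodule F (Fin n → F)) (m m' : ℕ) (h1 : m' ≤ m)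
    (hm : m ≤ finrank F ↥C) : GHW m' C + (m - m') ≤ GHW m C := by
  obtain ⟨D, hD, hfr, hsupp⟩ := GHW_exists C m hm
  obtain ⟨D', hle, hfr', hsupp'⟩ := shrink D (m - m') (by omega)
  have h1' : GHW m' C ≤ codeSupp D' := GHW_le (hle.trans hD) (by omega)
  rw [codeSupp_def] at h1' hsupp
  omega

lemma GHW_le_n (C : Submodule F (Fin n → F)) (m : ℕ) (hm : m ≤ finrank F ↥C) :
    GHW m C ≤ n := by
  obtain ⟨D, hD, hfr, hsupp⟩ := GHW_exists C m hm
  rw [← hsupp, codeSupp_def]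
  calc (suppSet D).ncard ≤ (Set.univ : Set (Fin n)).ncard :=
        Set.ncard_le_ncard (Set.subset_univ _) Set.finite_univ
    _ = n := by rw [Set.ncard_univ, Nat.card_eq_fintype_card, Fintype.card_fin]

end aux

/-- Asymptotic lower bound via the ratio bound: if `d_1(C_i) ≥ n_i - k_i - g_i`
with `k_i/n_i → R`, `g_i/n_i → γ`, `1 - R - γ > 0` and `m_i/n_i → ρ > 0`
(`1 ≤ m_i ≤ k_i`), then
`liminf d_{m_i}(C_i)/n_i ≥ (q/(q-1))·(1 - R - γ) + ρ`. -/
theorem asymptotic_ratio_ghw {F : Type} [Field F] [Fintype F]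
    (n k g m : ℕ → ℕ) (C : ∀ i : ℕ, Submodule F (Fin (n i) → F))
    (R γ ρ : ℝ)
    (hn : Tendsto n atTop atTop)
    (hk : ∀ i, Module.finrank F ↥(C i) = k i)
    (hR : Tendsto (fun i => (k i : ℝ) / (n i : ℝ)) atTop (𝓝 R))
    (hγ : Tendsto (fun i => (g i : ℝ) / (n i : ℝ)) atTop (𝓝 γ))
    (hRγ : 0 < 1 - R - γ)
    (hd1 : ∀ i, (n i : ℤ) - (k i : ℤ) - (g i : ℤ) ≤ (GHW 1 (C i) : ℤ))
    (hm : ∀ i, 1 ≤ m i ∧ m i ≤ k i)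
    (hρ : Tendsto (fun i => (m i : ℝ) / (n i : ℝ)) atTop (𝓝 ρ))
    (hρpos : 0 < ρ) :
    ((Fintype.card F : ℝ) / ((Fintype.card F : ℝ) - 1)) * (1 - R - γ) + ρ ≤
      atTop.liminf (fun i => (GHW (m i) (C i) : ℝ) / (n i : ℝ)) := by
  classical
  set q : ℝ := (Fintype.card F : ℝ) with hqdef
  have hcard2 : 1 < Fintype.card F := Fintype.one_lt_card
  have hq1 : (1:ℝ) < q := by rw [hqdef]; exact_mod_cast hcard2
  have hq0 : (0:ℝ) < q := lt_trans one_pos hq1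
  have hq1' : (0:ℝ) < q - 1 := by linarith
  set f := fun i => (GHW (m i) (C i) : ℝ) / (n i : ℝ) with hfdef
  have hf1 : ∀ i, f i ≤ 1 := by
    intro i
    rcases Nat.eq_zero_or_pos (n i) with h | h
    · simp [hfdef, h]
    · have hle : GHW (m i) (C i) ≤ n i := GHW_le_n _ _ (by rw [hk i]; exact (hm i).2)
      rw [hfdef, div_le_one (by exact_mod_cast h)]
      exact_mod_cast hle
  have hfcb : IsCoboundedUnder (· ≥ ·) atTop f :=
    (isBoundedUnder_of ⟨1, fun i => hf1 i⟩).isCoboundedUnder_ge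
  have hn1 : ∀ᶠ i in atTop, 1 ≤ n i := hn.eventually_ge_atTop 1
  have hmtop : Tendsto m atTop atTop := by
    rw [← tendsto_natCast_atTop_iff (R := ℝ)]
    have h1 : Tendsto (fun i => (m i / n i : ℝ) * n i) atTop atTop :=
      hρ.pos_mul_atTop hρpos (tendsto_natCast_atTop_atTop.comp hn)
    apply h1.congr'
    filter_upwards [hn1] with i hi
    have hne : (n i : ℝ) ≠ 0 := by
      have : (0:ℝ) < n i := by exact_mod_cast hi
      exact this.ne'
    field_simp
  have key : ∀ ε : ℝ, 0 < ε → ε ≤ 1 →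
      q / (q - 1) * (1 - R - γ) + (ρ - ε * ρ) ≤ atTop.liminf f := by
    intro ε hε0 hε1
    set M := fun i => ⌈ε * m i⌉₊ with hMdef
    have hM1 : ∀ i, 1 ≤ M i := by
      intro i
      have hmi : (0:ℝ) < (m i : ℝ) := by
        have := (hm i).1
        exact_mod_cast Nat.lt_of_lt_of_le Nat.zero_lt_one this
      exact Nat.ceil_pos.mpr (mul_pos hε0 hmi)
    have hMle : ∀ i, M i ≤ m i := by
      intro i
      rw [hMdef, Nat.ceil_le]
      calc ε * m i ≤ 1 * m i := by gcongr
        _ = m i := one_mul _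
    have hMtop : Tendsto M atTop atTop := by
      rw [← tendsto_natCast_atTop_iff (R := ℝ)]
      have h1 : Tendsto (fun i => ε * (m i : ℝ)) atTop atTop :=
        (tendsto_natCast_atTop_atTop.comp hmtop).const_mul_atTop hε0
      exact tendsto_atTop_mono (fun i => Nat.le_ceil _) h1
    set c := fun i => (q - q / q ^ M i) / (q - 1) with hcdef
    have hpow_pos : ∀ i, (0:ℝ) < q ^ M i := fun i => pow_pos hq0 _
    have hc_nonneg : ∀ i, 0 ≤ c i := by
      intro i
      apply div_nonneg _ hq1'.le
      have h1 : (1:ℝ) ≤ q ^ M i := one_le_pow₀ hq1.le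
      have h2 : q / q ^ M i ≤ q := by
        rw [div_le_iff₀ (hpow_pos i)]
        nlinarith
      linarith
    have hLf : ∀ᶠ i in atTop,
        c i * (((n i:ℝ) - k i - g i) / n i) + (((m i:ℝ) - M i) / n i) ≤ f i := by
      filter_upwards [hn1] with i hni
      have hn0 : (0:ℝ) < n i := by exact_mod_cast hni
      have hG1 : ((n i:ℝ) - k i - g i) ≤ (GHW 1 (C i) : ℝ) := by exact_mod_cast hd1 i
      have hrat := GHW_ratio (C i) (M i) (hM1 i)
        (by rw [hk i]; exact le_trans (hMle i) (hm i).2)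
      obtain ⟨N, hN⟩ : ∃ N, M i = N + 1 := ⟨M i - 1, by have := hM1 i; omega⟩
      rw [hN] at hrat
      simp only [Nat.add_sub_cancel] at hrat
      have h1n : 1 ≤ Fintype.card F ^ (N+1) := Nat.one_le_pow _ _ (by omega)
      have h2n : Fintype.card F ^ N ≤ Fintype.card F ^ (N+1) :=
        Nat.pow_le_pow_right (by omega) (by omega)
      have hratR : ((q^(N+1) - 1) * GHW 1 (C i) : ℝ)
          ≤ (q^(N+1) - q^N) * GHW (M i) (C i) := by
        have hcast := (Nat.cast_le (α := ℝ)).mpr hrat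
        rw [hN]
        push_cast [Nat.cast_sub h1n, Nat.cast_sub h2n] at hcast
        rw [hqdef]
        convert hcast using 2 <;> push_cast <;> ring
      have hden : (0:ℝ) < q^(N+1) - q^N := by
        have hp := pow_pos hq0 N
        have hs : q^(N+1) = q^N * q := pow_succ q N
        nlinarith
      have hcG : c i * (GHW 1 (C i) : ℝ) ≤ (GHW (M i) (C i) : ℝ) := by
        have hc_eq : c i = (q^(N+1) - 1) / (q^(N+1) - q^N) := by
          rw [hcdef]
          simp only [hN]
          rw [div_eq_div_iff hq1'.ne' hden.ne']
          have hpne : q^(N+1) ≠ 0 := (pow_pos hq0 _).ne'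
          field_simp
          ring
        rw [hc_eq, div_mul_eq_mul_div, div_le_iff₀ hden]
        nlinarith [hratR]
      have hmono := GHW_mono (C i) (m i) (M i) (hMle i) (by rw [hk i]; exact (hm i).2)
      have hmonoR : (GHW (M i) (C i) : ℝ) + ((m i:ℝ) - M i) ≤ (GHW (m i) (C i) : ℝ) := by
        have hcast := (Nat.cast_le (α := ℝ)).mpr hmono
        push_cast [Nat.cast_sub (hMle i)] at hcast
        linarith
      have hcomb : c i * ((n i:ℝ) - k i - g i) + ((m i:ℝ) - M i)
          ≤ (GHW (m i) (C i) : ℝ) := by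
        have h1 : c i * ((n i:ℝ) - k i - g i) ≤ c i * GHW 1 (C i) :=
          mul_le_mul_of_nonneg_left hG1 (hc_nonneg i)
        linarith
      have heq : c i * (((n i:ℝ) - k i - g i) / n i) + (((m i:ℝ) - M i) / n i)
          = (c i * ((n i:ℝ) - k i - g i) + ((m i:ℝ) - M i)) / n i := by
        ring
      rw [heq]
      simp only [hfdef]
      gcongr
    -- limits
    have hcL : Tendsto c atTop (𝓝 (q/(q-1))) := by
      have h1 : Tendsto (fun i => q ^ M i) atTop atTop :=
        (tendsto_pow_atTop_atTop_of_one_lt hq1).comp hMtop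
      have h2 : Tendsto (fun i => q / q ^ M i) atTop (𝓝 0) :=
        Tendsto.div_atTop tendsto_const_nhds h1
      have h3 : Tendsto (fun i => (q - q / q ^ M i)) atTop (𝓝 (q - 0)) :=
        tendsto_const_nhds.sub h2
      rw [sub_zero] at h3
      exact h3.div_const _
    have hnkg : Tendsto (fun i => ((n i:ℝ) - k i - g i)/n i) atTop (𝓝 (1 - R - γ)) := by
      have h1 : Tendsto (fun i => 1 - (k i:ℝ)/n i - (g i:ℝ)/n i) atTop (𝓝 (1 - R - γ)) :=
        (tendsto_const_nhds.sub hR).sub hγ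
      apply h1.congr'
      filter_upwards [hn1] with i hni
      have hne : (n i:ℝ) ≠ 0 := by
        have : (0:ℝ) < n i := by exact_mod_cast hni
        exact this.ne'
      field_simp
    have hinv : Tendsto (fun i => 1 / (n i : ℝ)) atTop (𝓝 0) :=
      Tendsto.div_atTop tendsto_const_nhds (tendsto_natCast_atTop_atTop.comp hn)
    have hMn : Tendsto (fun i => (M i:ℝ)/n i) atTop (𝓝 (ε * ρ)) := by
      have hlow : Tendsto (fun i => ε * ((m i:ℝ)/n i)) atTop (𝓝 (ε * ρ)) := hρ.const_mul ε
      have hup : Tendsto (fun i => ε * ((m i:ℝ)/n i) + 1/n i) atTop (𝓝 (ε * ρ + 0)) :=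
        hlow.add hinv
      rw [add_zero] at hup
      apply tendsto_of_tendsto_of_tendsto_of_le_of_le' hlow hup
      · filter_upwards [hn1] with i hni
        have hn0 : (0:ℝ) < n i := by exact_mod_cast hni
        rw [mul_div_assoc'] -- ε * (m/n) = (ε*m)/n
        gcongr
        exact Nat.le_ceil _
      · filter_upwards [hn1] with i hni
        have hn0 : (0:ℝ) < n i := by exact_mod_cast hni
        have hub : (M i : ℝ) ≤ ε * m i + 1 := by
          have h0 : (0:ℝ) ≤ ε * m i := by positivity
          exact (Nat.ceil_lt_add_one h0).le
        calc (M i : ℝ)/n i ≤ (ε * m i + 1)/n i := by gcongr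
          _ = ε * ((m i:ℝ)/n i) + 1/n i := by ring
    have hmn' : Tendsto (fun i => ((m i:ℝ) - M i)/n i) atTop (𝓝 (ρ - ε*ρ)) := by
      have h1 : Tendsto (fun i => (m i:ℝ)/n i - (M i:ℝ)/n i) atTop (𝓝 (ρ - ε*ρ)) :=
        hρ.sub hMn
      apply h1.congr
      intro i
      rw [sub_div]
    have hL : Tendsto
        (fun i => c i * (((n i:ℝ) - k i - g i) / n i) + (((m i:ℝ) - M i) / n i))
        atTop (𝓝 (q/(q-1) * (1-R-γ) + (ρ - ε*ρ))) := (hcL.mul hnkg).add hmn'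
    calc q/(q-1) * (1-R-γ) + (ρ - ε*ρ)
        = atTop.liminf (fun i => c i * (((n i:ℝ) - k i - g i) / n i)
            + (((m i:ℝ) - M i) / n i)) := (hL.liminf_eq).symm
      _ ≤ atTop.liminf f := Filter.liminf_le_liminf hLf hL.isBoundedUnder_ge hfcb
  apply le_of_forall_pos_le_add
  intro δ hδ
  have hε0 : 0 < min 1 (δ/ρ) := lt_min one_pos (div_pos hδ hρpos)
  have hkey := key (min 1 (δ/ρ)) hε0 (min_le_left _ _)
  have h2 : min 1 (δ/ρ) * ρ ≤ δ := by
    calc min 1 (δ/ρ) * ρ ≤ (δ/ρ) * ρ := by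
          gcongr
          exact min_le_right _ _
      _ = δ := div_mul_cancel₀ _ hρpos.ne'
  linarith
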